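/- Let N ≥ 1, let α, c₁, …, c_N ∈ ℝ with Σᵢ cᵢ = 0, and let w₁, …, w_N : ℝ² → ℝ be smooth functions of (x,t). Set u = Σ_{j=1}^N c_j w_j and u₂ = Σ_{j=1}^N (c_j/2) w_j². Suppose that for every i, ∂_t wᵢ = ( wᵢ² − α wᵢ u − α u₂ + u ) ∂_x wᵢ + ( wᵢ − α u ) ∂_x u + ∂_x u₂ holds everywhere. Then for every (x,t) ∈ ℝ² and every p ∈ ℝ with p > max_i wᵢ(x,t), the function L(x,t,p) = p − Σᵢ cᵢ ln(p − wᵢ(x,t)) satisfies the t-flow Lax equation ∂_t L = ( p² − α u p − α u₂ + u ) ∂_x L − ( (∂_x u) p − α u ∂_x u + ∂_x u₂ ) ∂_p L. -/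

import Mathlib

/-- Partial derivative in `x` of a function on `ℝ² = (x,t)`. -/
noncomputable def pdx (f : ℝ × ℝ → ℝ) (q : ℝ × ℝ) : ℝ :=
  deriv (fun s => f (s, q.2)) q.1

/-- Partial derivative in `t` of a function on `ℝ² = (x,t)`. -/
noncomputable def pdt (f : ℝ × ℝ → ℝ) (q : ℝ × ℝ) : ℝ :=
  deriv (fun s => f (q.1, s)) q.2

/-- Partial derivative in `x` of a function on `ℝ³ = (x,t,p)`. -/
noncomputable def pd3x (f : ℝ × ℝ × ℝ → ℝ) (r : ℝ × ℝ × ℝ) : ℝ :=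
  deriv (fun s => f (s, r.2.1, r.2.2)) r.1

/-- Partial derivative in `t` of a function on `ℝ³ = (x,t,p)`. -/
noncomputable def pd3t (f : ℝ × ℝ × ℝ → ℝ) (r : ℝ × ℝ × ℝ) : ℝ :=
  deriv (fun s => f (r.1, s, r.2.2)) r.2.1

/-- Partial derivative in the spectral variable `p` of a function on `ℝ³ = (x,t,p)`. -/
noncomputable def pd3p (f : ℝ × ℝ × ℝ → ℝ) (r : ℝ × ℝ × ℝ) : ℝ :=
  deriv (fun s => f (r.1, r.2.1, s)) r.2.2

/-- The waterbag Lax function `L(x,t,p) = p − Σᵢ cᵢ ln(p − wᵢ(x,t))`. -/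
noncomputable def waterbagL {N : ℕ} (c : Fin N → ℝ) (w : Fin N → ℝ × ℝ → ℝ)
    (r : ℝ × ℝ × ℝ) : ℝ :=
  r.2.2 - ∑ i, c i * Real.log (r.2.2 - w i (r.1, r.2.1))

/-- If the waterbag fields `wᵢ` satisfy the hydrodynamic-type system
`∂_t wᵢ = (wᵢ² − α wᵢ u − α u₂ + u)∂_x wᵢ + (wᵢ − α u)∂_x u + ∂_x u₂` with
`u = Σⱼ cⱼ wⱼ` and `u₂ = Σⱼ (cⱼ/2) wⱼ²`, then the waterbag Lax function
`L = p − Σᵢ cᵢ ln(p − wᵢ)` satisfies the `t`-flow Lax equation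
`∂_t L = (p² − α u p − α u₂ + u)∂_x L − (u_x p − α u u_x + ∂_x u₂)∂_p L`
wherever `p > maxᵢ wᵢ`. -/
theorem waterbag_t_flow (N : ℕ) (hN : 1 ≤ N) (α : ℝ) (c : Fin N → ℝ)
    (hc : ∑ i, c i = 0) (w : Fin N → ℝ × ℝ → ℝ)
    (hw : ∀ i, ContDiff ℝ (⊤ : ℕ∞) (w i))
    (u u₂ : ℝ × ℝ → ℝ) (hu : ∀ q : ℝ × ℝ, u q = ∑ j, c j * w j q)
    (hu₂ : ∀ q : ℝ × ℝ, u₂ q = ∑ j, (c j / 2) * (w j q) ^ 2)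
    (hflow : ∀ i, ∀ q : ℝ × ℝ,
      pdt (w i) q
        = ((w i q) ^ 2 - α * w i q * u q - α * u₂ q + u q) * pdx (w i) q
          + (w i q - α * u q) * pdx u q + pdx u₂ q) :
    ∀ q : ℝ × ℝ, ∀ p : ℝ, (∀ i, w i q < p) →
      pd3t (waterbagL c w) (q.1, q.2, p)
        = (p ^ 2 - α * u q * p - α * u₂ q + u q) * pd3x (waterbagL c w) (q.1, q.2, p)
          - (pdx u q * p - α * u q * pdx u q + pdx u₂ q)
            * pd3p (waterbagL c w) (q.1, q.2, p) := by
  intro q p hp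
  have hne : ∀ i, p - w i q ≠ 0 := fun i => (sub_pos.2 (hp i)).ne'
  -- partial derivatives of the fields
  have hwx : ∀ i, HasDerivAt (fun s => w i (s, q.2)) (pdx (w i) q) q.1 := by
    intro i
    have hd : Differentiable ℝ (fun s : ℝ => w i (s, q.2)) :=
      ((hw i).differentiable (by simp)).comp (differentiable_id.prodMk (differentiable_const _))
    exact (hd q.1).hasDerivAt
  have hwt : ∀ i, HasDerivAt (fun s => w i (q.1, s)) (pdt (w i) q) q.2 := by
    intro i
    have hd : Differentiable ℝ (fun s : ℝ => w i (q.1, s)) :=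
      ((hw i).differentiable (by simp)).comp ((differentiable_const _).prodMk differentiable_id)
    exact (hd q.2).hasDerivAt
  -- the three partials of L
  have hLx : pd3x (waterbagL c w) (q.1, q.2, p)
      = ∑ i, c i * (pdx (w i) q / (p - w i q)) := by
    have h : HasDerivAt (fun s => waterbagL c w (s, q.2, p))
        (0 - ∑ i, c i * ((0 - pdx (w i) q) / (p - w i q))) q.1 := by
      apply HasDerivAt.sub (hasDerivAt_const _ _)
      apply HasDerivAt.fun_sum
      intro i _
      exact (((hasDerivAt_const q.1 p).sub (hwx i)).log (hne i)).const_mul (c i)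
    rw [show pd3x (waterbagL c w) (q.1, q.2, p)
        = deriv (fun s => waterbagL c w (s, q.2, p)) q.1 from rfl, h.deriv]
    rw [zero_sub, ← Finset.sum_neg_distrib]
    exact Finset.sum_congr rfl fun i _ => by ring
  have hLt : pd3t (waterbagL c w) (q.1, q.2, p)
      = ∑ i, c i * (pdt (w i) q / (p - w i q)) := by
    have h : HasDerivAt (fun s => waterbagL c w (q.1, s, p))
        (0 - ∑ i, c i * ((0 - pdt (w i) q) / (p - w i q))) q.2 := by
      apply HasDerivAt.sub (hasDerivAt_const _ _)
      apply HasDerivAt.fun_sum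
      intro i _
      exact (((hasDerivAt_const q.2 p).sub (hwt i)).log (hne i)).const_mul (c i)
    rw [show pd3t (waterbagL c w) (q.1, q.2, p)
        = deriv (fun s => waterbagL c w (q.1, s, p)) q.2 from rfl, h.deriv]
    rw [zero_sub, ← Finset.sum_neg_distrib]
    exact Finset.sum_congr rfl fun i _ => by ring
  have hLp : pd3p (waterbagL c w) (q.1, q.2, p)
      = 1 - ∑ i, c i * (1 / (p - w i q)) := by
    have h : HasDerivAt (fun s : ℝ => waterbagL c w (q.1, q.2, s))
        (1 - ∑ i, c i * ((1 - 0) / (p - w i q))) p := by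
      apply HasDerivAt.sub (hasDerivAt_id p)
      apply HasDerivAt.fun_sum
      intro i _
      exact (((hasDerivAt_id p).sub (hasDerivAt_const p (w i q))).log (hne i)).const_mul (c i)
    rw [show pd3p (waterbagL c w) (q.1, q.2, p)
        = deriv (fun s => waterbagL c w (q.1, q.2, s)) p from rfl, h.deriv]
    exact congrArg _ (Finset.sum_congr rfl fun i _ => by ring)
  -- x-derivatives of u and u₂
  have huxe : pdx u q = ∑ j, c j * pdx (w j) q := by
    have h : HasDerivAt (fun s => u (s, q.2)) (∑ j, c j * pdx (w j) q) q.1 := by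
      have he : (fun s => u (s, q.2)) = fun s => ∑ j, c j * w j (s, q.2) :=
        funext fun s => hu (s, q.2)
      rw [he]
      exact HasDerivAt.fun_sum fun j _ => (hwx j).const_mul (c j)
    exact h.deriv
  have hu2xe : pdx u₂ q = ∑ j, c j * w j q * pdx (w j) q := by
    have h : HasDerivAt (fun s => u₂ (s, q.2)) (∑ j, c j * w j q * pdx (w j) q) q.1 := by
      have he : (fun s => u₂ (s, q.2)) = fun s => ∑ j, (c j / 2) * (w j (s, q.2)) ^ 2 :=
        funext fun s => hu₂ (s, q.2)
      rw [he]
      apply HasDerivAt.fun_sum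
      intro j _
      have h2 := ((hwx j).fun_pow 2).const_mul (c j / 2)
      refine h2.congr_deriv ?_
      push_cast
      ring
    exact h.deriv
  -- termwise key identity
  have key : ∀ i, c i * (pdt (w i) q / (p - w i q))
      = (p ^ 2 - α * u q * p - α * u₂ q + u q) * (c i * (pdx (w i) q / (p - w i q)))
        + (pdx u q * p - α * u q * pdx u q + pdx u₂ q) * (c i * (1 / (p - w i q)))
        - (c i * (p + w i q - α * u q) * pdx (w i) q + c i * pdx u q) := by
    intro i
    rw [hflow i q]
    field_simp [hne i]
    ring
  have hsum3 : ∑ i, (c i * (p + w i q - α * u q) * pdx (w i) q + c i * pdx u q)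
      = (pdx u q * p - α * u q * pdx u q + pdx u₂ q) + (∑ i, c i) * pdx u q := by
    have step : ∀ i ∈ Finset.univ,
        c i * (p + w i q - α * u q) * pdx (w i) q + c i * pdx u q
          = ((c i * pdx (w i) q) * p - α * u q * (c i * pdx (w i) q)
              + c i * w i q * pdx (w i) q) + c i * pdx u q := fun i _ => by ring
    rw [Finset.sum_congr rfl step, Finset.sum_add_distrib, Finset.sum_add_distrib,
      Finset.sum_sub_distrib, ← Finset.sum_mul, ← Finset.mul_sum, ← Finset.sum_mul,
      ← huxe, ← hu2xe]
  rw [hLt, hLx, hLp, Finset.sum_congr rfl fun i _ => key i, Finset.sum_sub_distrib,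
    Finset.sum_add_distrib, ← Finset.mul_sum, ← Finset.mul_sum, hsum3, hc]
  ring
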